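/- Let R be a commutative ring and let a, b : ℤ → R satisfy a(n) = b(n) = 0 for all n < 0, a(0) = b(0) = 1, and Σ_{i+j=n, i,j ≥ 0} a(i)·b(j) = 0 for every n ≥ 1 (i.e. the power series Σ a(n)t^n and Σ b(n)t^n are mutually inverse). Let d, ℓ be natural numbers and let λ be a partition in the d × ℓ box (a weakly decreasing function {1,…,d} → ℕ with values at most ℓ), with transpose λᵗ in the ℓ × d box given by λᵗ_i := #{ j : λ_j ≥ i }, and with size |λ| = Σ_i λ_i. Then det( a(λ_i + j − i) )_{1 ≤ i,j ≤ d} = (−1)^{|λ|} · det( b(λᵗ_i + j − i) )_{1 ≤ i,j ≤ ℓ}. -/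

import Mathlib

open Finset Matrix Equiv

namespace Stmt10Aux

variable (d ℓ : ℕ)

/-- Transpose partition value: `Tt lam j = #{t : lam t ≥ j+1}`. -/
def Tt (lam : Fin d → ℕ) (j : ℕ) : ℕ :=
  (Finset.univ.filter fun t : Fin d => j + 1 ≤ lam t).card

lemma Tt_le (lam : Fin d → ℕ) (j : ℕ) : Tt d lam j ≤ d := by
  classical
  calc Tt d lam j ≤ (Finset.univ : Finset (Fin d)).card := Finset.card_filter_le _ _
    _ = d := by simp

lemma Tt_lt_iff (lam : Fin d → ℕ) (hlam : Antitone lam) (i : Fin d) (j : ℕ) :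
    (i : ℕ) < Tt d lam j ↔ j + 1 ≤ lam i := by
  constructor
  · intro h
    by_contra hc
    push_neg at hc
    have hsub : (Finset.univ.filter fun t : Fin d => j + 1 ≤ lam t) ⊆ Finset.Iio i := by
      intro t ht
      simp only [Finset.mem_filter] at ht
      rw [Finset.mem_Iio]
      by_contra hti
      push_neg at hti
      have := hlam hti
      omega
    have := Finset.card_le_card hsub
    rw [Fin.card_Iio] at this
    unfold Tt at h
    omega
  · intro h
    have hsub : Finset.Iic i ⊆ (Finset.univ.filter fun t : Fin d => j + 1 ≤ lam t) := by
      intro t ht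
      rw [Finset.mem_Iic] at ht
      simp only [Finset.mem_filter, Finset.mem_univ, true_and]
      have := hlam ht
      omega
    have := Finset.card_le_card hsub
    rw [Fin.card_Iic] at this
    unfold Tt
    omega

lemma Tt_anti (lam : Fin d → ℕ) : Antitone (Tt d lam) := by
  intro j j' h
  apply Finset.card_le_card
  intro t ht
  simp only [Finset.mem_filter, Finset.mem_univ, true_and] at ht ⊢
  omega

/-- Row labels. -/
def rho (lam : Fin d → ℕ) : Fin d ⊕ Fin ℓ → ℕ :=
  Sum.elim (fun i => ℓ - lam i + (i : ℕ))
    (fun j => (ℓ - 1 - (j : ℕ)) + Tt d lam (j : ℕ))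

/-- Column labels. -/
def sig : Fin d ⊕ Fin ℓ → ℕ :=
  Sum.elim (fun i => ℓ + (i : ℕ)) (fun j => ℓ - 1 - (j : ℕ))

@[simp] lemma rho_inl (lam : Fin d → ℕ) (i : Fin d) :
    rho d ℓ lam (Sum.inl i) = ℓ - lam i + (i : ℕ) := rfl
@[simp] lemma rho_inr (lam : Fin d → ℕ) (j : Fin ℓ) :
    rho d ℓ lam (Sum.inr j) = (ℓ - 1 - (j : ℕ)) + Tt d lam (j : ℕ) := rfl
@[simp] lemma sig_inl (i : Fin d) : sig d ℓ (Sum.inl i) = ℓ + (i : ℕ) := rfl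
@[simp] lemma sig_inr (j : Fin ℓ) : sig d ℓ (Sum.inr j) = ℓ - 1 - (j : ℕ) := rfl

lemma rho_lt (lam : Fin d → ℕ) (hle : ∀ i, lam i ≤ ℓ) (x : Fin d ⊕ Fin ℓ) :
    rho d ℓ lam x < d + ℓ := by
  rcases x with i | j
  · have := i.isLt; simp only [rho_inl]; omega
  · have := j.isLt
    have := Tt_le d lam (j : ℕ)
    simp only [rho_inr]; omega

lemma sig_lt (x : Fin d ⊕ Fin ℓ) : sig d ℓ x < d + ℓ := by
  rcases x with i | j
  · have := i.isLt; simp only [sig_inl]; omega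
  · have := j.isLt; simp only [sig_inr]; omega

lemma rho_cross (lam : Fin d → ℕ) (hlam : Antitone lam) (hle : ∀ i, lam i ≤ ℓ)
    (i : Fin d) (j : Fin ℓ) :
    rho d ℓ lam (Sum.inl i) ≠ rho d ℓ lam (Sum.inr j) := by
  have hj := j.isLt
  have hi := hle i
  simp only [rho_inl, rho_inr]
  by_cases h : (j : ℕ) + 1 ≤ lam i
  · have hT := (Tt_lt_iff d lam hlam i (j : ℕ)).mpr h
    omega
  · have hT : ¬ ((i : ℕ) < Tt d lam (j : ℕ)) := fun hc =>
      h ((Tt_lt_iff d lam hlam i (j : ℕ)).mp hc)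
    omega

lemma rho_inj (lam : Fin d → ℕ) (hlam : Antitone lam) (hle : ∀ i, lam i ≤ ℓ) :
    Function.Injective (rho d ℓ lam) := by
  intro x y h
  rcases x with i | j <;> rcases y with i' | j'
  · simp only [rho_inl] at h
    rcases lt_trichotomy (i : ℕ) (i' : ℕ) with hlt | heq | hgt
    · have := hlam (show i ≤ i' from hlt.le)
      have := hle i; have := hle i'
      omega
    · exact congrArg Sum.inl (Fin.ext heq)
    · have := hlam (show i' ≤ i from hgt.le)
      have := hle i; have := hle i'
      omega
  · exact absurd h (rho_cross d ℓ lam hlam hle i j')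
  · exact absurd h.symm (rho_cross d ℓ lam hlam hle i' j)
  · simp only [rho_inr] at h
    have hj := j.isLt; have hj' := j'.isLt
    rcases lt_trichotomy (j : ℕ) (j' : ℕ) with hlt | heq | hgt
    · have := Tt_anti d lam (show (j : ℕ) ≤ (j' : ℕ) from hlt.le)
      omega
    · exact congrArg Sum.inr (Fin.ext heq)
    · have := Tt_anti d lam (show (j' : ℕ) ≤ (j : ℕ) from hgt.le)
      omega

lemma sig_inj : Function.Injective (sig d ℓ) := by
  intro x y h
  rcases x with i | j <;> rcases y with i' | j'
  · simp only [sig_inl] at h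
    exact congrArg Sum.inl (Fin.ext (by omega))
  · have := j'.isLt; simp only [sig_inl, sig_inr] at h; omega
  · have := j.isLt; simp only [sig_inl, sig_inr] at h; omega
  · have := j.isLt; have := j'.isLt
    simp only [sig_inr] at h
    exact congrArg Sum.inr (Fin.ext (by omega))

/-- Row-label equivalence. -/
noncomputable def rhoE (lam : Fin d → ℕ) (hlam : Antitone lam) (hle : ∀ i, lam i ≤ ℓ) :
    (Fin d ⊕ Fin ℓ) ≃ Fin (d + ℓ) :=
  Equiv.ofBijective (fun x => ⟨rho d ℓ lam x, rho_lt d ℓ lam hle x⟩)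
    (by
      rw [Fintype.bijective_iff_injective_and_card]
      refine ⟨fun x y h => rho_inj d ℓ lam hlam hle (congrArg Fin.val h), by simp⟩)

/-- Column-label equivalence. -/
noncomputable def sigE : (Fin d ⊕ Fin ℓ) ≃ Fin (d + ℓ) :=
  Equiv.ofBijective (fun x => ⟨sig d ℓ x, sig_lt d ℓ x⟩)
    (by
      rw [Fintype.bijective_iff_injective_and_card]
      refine ⟨fun x y h => sig_inj d ℓ (congrArg Fin.val h), by simp⟩)

@[simp] lemma rhoE_val (lam : Fin d → ℕ) (hlam : Antitone lam) (hle : ∀ i, lam i ≤ ℓ)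
    (x : Fin d ⊕ Fin ℓ) : ((rhoE d ℓ lam hlam hle x : Fin (d + ℓ)) : ℕ) = rho d ℓ lam x := rfl

@[simp] lemma sigE_val (x : Fin d ⊕ Fin ℓ) :
    ((sigE d ℓ x : Fin (d + ℓ)) : ℕ) = sig d ℓ x := rfl

lemma sign_tau : ∀ (n : ℕ) (lam : Fin d → ℕ) (hlam : Antitone lam) (hle : ∀ i, lam i ≤ ℓ),
    (∑ i, lam i) = n →
    Equiv.Perm.sign ((sigE d ℓ).trans (rhoE d ℓ lam hlam hle).symm) = (-1) ^ n := by
  intro n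
  induction n with
  | zero =>
    intro lam hlam hle hsum
    have hz : ∀ i, lam i = 0 := fun i =>
      Finset.sum_eq_zero_iff.mp hsum i (Finset.mem_univ i)
    have hrefl : (sigE d ℓ).trans (rhoE d ℓ lam hlam hle).symm = Equiv.refl _ := by
      apply Equiv.ext
      intro x
      simp only [Equiv.trans_apply, Equiv.refl_apply]
      rw [Equiv.symm_apply_eq]
      apply Fin.ext
      rw [rhoE_val, sigE_val]
      rcases x with i | j
      · simp [hz i]
      · have hT : Tt d lam (j : ℕ) = 0 := by
          unfold Tt
          rw [Finset.card_eq_zero, Finset.filter_eq_empty_iff]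
          intro t _
          simp [hz t]
        simp [hT]
    rw [hrefl]
    simp
  | succ n ih =>
    intro lam hlam hle hsum
    classical
    have hT0d : Tt d lam 0 ≤ d := Tt_le d lam 0
    have hT0pos : 1 ≤ Tt d lam 0 := by
      by_contra hc
      push_neg at hc
      have hz : ∀ i : Fin d, lam i = 0 := by
        intro i
        by_contra hne
        have : (i : ℕ) < Tt d lam 0 := (Tt_lt_iff d lam hlam i 0).mpr (by omega)
        omega
      rw [Finset.sum_eq_zero (fun i _ => hz i)] at hsum
      omega
    set i0 : Fin d := ⟨Tt d lam 0 - 1, by omega⟩ with hi0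
    have hi0v : (i0 : ℕ) = Tt d lam 0 - 1 := rfl
    have hm1 : 1 ≤ lam i0 := by
      have := (Tt_lt_iff d lam hlam i0 0).mp (by omega)
      omega
    set m := lam i0 with hm
    have hmle : m ≤ ℓ := hle i0
    set j0 : Fin ℓ := ⟨m - 1, by omega⟩ with hj0
    have hj0v : (j0 : ℕ) = m - 1 := rfl
    have htop : ∀ t : Fin d, (i0 : ℕ) < (t : ℕ) → lam t = 0 := by
      intro t ht
      by_contra hne
      have : (t : ℕ) < Tt d lam 0 := (Tt_lt_iff d lam hlam t 0).mpr (by omega)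
      omega
    set lam' := Function.update lam i0 (m - 1) with hlam'def
    have hlam'val : ∀ t, lam' t = if t = i0 then m - 1 else lam t := by
      intro t
      simp [lam', Function.update_apply]
    have hlam' : Antitone lam' := by
      intro s t hst
      rw [hlam'val, hlam'val]
      by_cases hs : s = i0 <;> by_cases ht2 : t = i0
      · simp [hs, ht2]
      · rw [if_pos hs, if_neg ht2]
        have hlt : (i0 : ℕ) < (t : ℕ) := by
          have h1 : (s : ℕ) ≤ (t : ℕ) := hst
          have h2 : (s : ℕ) = (i0 : ℕ) := congrArg Fin.val hs
          have h3 : (t : ℕ) ≠ (i0 : ℕ) := fun hc => ht2 (Fin.ext hc)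
          omega
        rw [htop t hlt]
        omega
      · rw [if_neg hs, if_pos ht2]
        have h4 : lam i0 ≤ lam s := by rw [← ht2]; exact hlam hst
        omega
      · rw [if_neg hs, if_neg ht2]
        exact hlam hst
    have hle' : ∀ i, lam' i ≤ ℓ := by
      intro i
      rw [hlam'val]
      split
      · omega
      · exact hle i
    have hsum' : (∑ i, lam' i) = n := by
      have h1 : ∑ i, lam' i = (m - 1) + ∑ i ∈ Finset.univ \ {i0}, lam i :=
        Finset.sum_update_of_mem (Finset.mem_univ i0) lam (m - 1)
      have h2 : lam i0 + ∑ i ∈ Finset.univ.erase i0, lam i = ∑ i, lam i :=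
        Finset.add_sum_erase Finset.univ lam (Finset.mem_univ i0)
      rw [← Finset.sdiff_singleton_eq_erase] at h2
      omega
    have hTt' : ∀ j : ℕ, j ≠ m - 1 → Tt d lam' j = Tt d lam j := by
      intro j hj
      unfold Tt
      congr 1
      apply Finset.filter_congr
      intro t _
      rw [hlam'val]
      split
      · next h => subst h; constructor <;> intro <;> omega
      · exact Iff.rfl
    have hTm : Tt d lam (m - 1) = (i0 : ℕ) + 1 := by
      have hlb : (i0 : ℕ) < Tt d lam (m - 1) :=
        (Tt_lt_iff d lam hlam i0 (m - 1)).mpr (by omega)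
      have hub : Tt d lam (m - 1) ≤ (i0 : ℕ) + 1 := by
        by_contra hc
        push_neg at hc
        have hTd := Tt_le d lam (m - 1)
        have hd : (i0 : ℕ) + 1 < d := by omega
        have h2 := (Tt_lt_iff d lam hlam ⟨(i0 : ℕ) + 1, hd⟩ (m - 1)).mp (by
          show ((⟨(i0 : ℕ) + 1, hd⟩ : Fin d) : ℕ) < Tt d lam (m - 1)
          simp only []
          omega)
        have h0 := htop ⟨(i0 : ℕ) + 1, hd⟩ (by simp)
        omega
      omega
    have hTm' : Tt d lam' (m - 1) = (i0 : ℕ) := by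
      have hub : Tt d lam' (m - 1) ≤ (i0 : ℕ) := by
        by_contra hc
        push_neg at hc
        have := (Tt_lt_iff d lam' hlam' i0 (m - 1)).mp hc
        rw [hlam'val, if_pos rfl] at this
        omega
      have hlb : (i0 : ℕ) ≤ Tt d lam' (m - 1) := by
        rcases Nat.eq_zero_or_pos (i0 : ℕ) with h0 | h0
        · omega
        · have hd : (i0 : ℕ) - 1 < d := by have := i0.isLt; omega
          have hne : (⟨(i0 : ℕ) - 1, hd⟩ : Fin d) ≠ i0 := by
            rw [Fin.ne_iff_vne]
            show (i0 : ℕ) - 1 ≠ (i0 : ℕ)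
            omega
          have hmono : lam i0 ≤ lam ⟨(i0 : ℕ) - 1, hd⟩ := by
            apply hlam
            rw [Fin.le_def]
            show (i0 : ℕ) - 1 ≤ (i0 : ℕ)
            omega
          have : ((⟨(i0 : ℕ) - 1, hd⟩ : Fin d) : ℕ) < Tt d lam' (m - 1) := by
            apply (Tt_lt_iff d lam' hlam' _ (m - 1)).mpr
            rw [hlam'val, if_neg hne]
            omega
          simp only [] at this
          omega
      omega
    have hswap : ∀ z, rho d ℓ lam ((Equiv.swap (Sum.inl i0) (Sum.inr j0)) z)
        = rho d ℓ lam' z := by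
      intro z
      rcases z with i | j
      · by_cases hz : i = i0
        · subst hz
          rw [Equiv.swap_apply_left]
          rw [rho_inr, rho_inl, hlam'val, if_pos rfl, hj0v, hTm]
          omega
        · rw [Equiv.swap_apply_of_ne_of_ne (by simp [hz]) (by simp)]
          rw [rho_inl, rho_inl, hlam'val, if_neg hz]
      · by_cases hz : j = j0
        · subst hz
          rw [Equiv.swap_apply_right]
          rw [rho_inl, rho_inr, hj0v, hTm']
          omega
        · rw [Equiv.swap_apply_of_ne_of_ne (by simp) (by simp [hz])]
          rw [rho_inr, rho_inr, hTt' (j : ℕ) (by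
            intro hc
            apply hz
            apply Fin.ext
            rw [hj0v, hc])]
    have htau : (sigE d ℓ).trans (rhoE d ℓ lam hlam hle).symm
        = ((sigE d ℓ).trans (rhoE d ℓ lam' hlam' hle').symm).trans
            (Equiv.swap (Sum.inl i0) (Sum.inr j0)) := by
      apply Equiv.ext
      intro z
      simp only [Equiv.trans_apply]
      apply (rhoE d ℓ lam hlam hle).injective
      rw [Equiv.apply_symm_apply]
      have hkey : (rhoE d ℓ lam hlam hle)
            ((Equiv.swap (Sum.inl i0) (Sum.inr j0))
              ((rhoE d ℓ lam' hlam' hle').symm (sigE d ℓ z)))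
          = (rhoE d ℓ lam' hlam' hle')
              ((rhoE d ℓ lam' hlam' hle').symm (sigE d ℓ z)) := by
        apply Fin.ext
        rw [rhoE_val, rhoE_val]
        exact hswap _
      rw [hkey, Equiv.apply_symm_apply]
    rw [htau]
    have hmul : ((sigE d ℓ).trans (rhoE d ℓ lam' hlam' hle').symm).trans
            (Equiv.swap (Sum.inl i0) (Sum.inr j0))
        = (Equiv.swap (Sum.inl i0) (Sum.inr j0))
            * ((sigE d ℓ).trans (rhoE d ℓ lam' hlam' hle').symm) := rfl
    rw [hmul, Equiv.Perm.sign_mul, ih lam' hlam' hle' hsum',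
      Equiv.Perm.sign_swap (by simp)]
    rw [pow_succ]
    exact mul_comm _ _

variable {R : Type*} [CommRing R]

lemma AB_one (a b : ℤ → R)
    (ha : ∀ n : ℤ, n < 0 → a n = 0) (hb : ∀ n : ℤ, n < 0 → b n = 0)
    (ha0 : a 0 = 1) (hb0 : b 0 = 1)
    (hab : ∀ n : ℕ, 1 ≤ n →
      (∑ p ∈ Finset.HasAntidiagonal.antidiagonal n, a (p.1 : ℤ) * b (p.2 : ℤ)) = 0)
    (N : ℕ) :
    (Matrix.of fun p q : Fin N => a (((q : ℕ) : ℤ) - ((p : ℕ) : ℤ)))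
      * (Matrix.of fun p q : Fin N => b (((q : ℕ) : ℤ) - ((p : ℕ) : ℤ))) = 1 := by
  ext p q
  rw [Matrix.mul_apply]
  simp only [Matrix.of_apply]
  rcases lt_or_ge (q : ℕ) (p : ℕ) with hlt | hge
  · have hpq : p ≠ q := by
      intro h; subst h; omega
    rw [Matrix.one_apply_ne hpq]
    apply Finset.sum_eq_zero
    intro t _
    rcases lt_or_ge (t : ℕ) (p : ℕ) with h | h
    · rw [ha _ (by push_cast; omega), zero_mul]
    · rw [hb _ (by push_cast; omega), mul_zero]
  · set n := (q : ℕ) - (p : ℕ) with hn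
    have hqn : (q : ℕ) = (p : ℕ) + n := by omega
    have hNq : (p : ℕ) + n < N := by have := q.isLt; omega
    have step1 : (∑ t : Fin N, a (((t : ℕ) : ℤ) - ((p : ℕ) : ℤ))
          * b (((q : ℕ) : ℤ) - ((t : ℕ) : ℤ)))
        = ∑ t ∈ Finset.range N, a ((t : ℤ) - ((p : ℕ) : ℤ))
            * b (((q : ℕ) : ℤ) - (t : ℤ)) :=
      Fin.sum_univ_eq_sum_range
        (fun t : ℕ => a ((t : ℤ) - ((p : ℕ) : ℤ)) * b (((q : ℕ) : ℤ) - (t : ℤ))) N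
    have step2 : (∑ t ∈ Finset.range ((p : ℕ) + (n + 1)),
          a ((t : ℤ) - ((p : ℕ) : ℤ)) * b (((q : ℕ) : ℤ) - (t : ℤ)))
        = ∑ t ∈ Finset.range N, a ((t : ℤ) - ((p : ℕ) : ℤ))
            * b (((q : ℕ) : ℤ) - (t : ℤ)) := by
      apply Finset.sum_subset (Finset.range_subset_range.mpr (by omega))
      intro t ht htn
      rw [Finset.mem_range] at ht htn
      rw [hb _ (by push_cast; omega), mul_zero]
    have step3 : (∑ t ∈ Finset.range ((p : ℕ) + (n + 1)),
          a ((t : ℤ) - ((p : ℕ) : ℤ)) * b (((q : ℕ) : ℤ) - (t : ℤ)))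
        = ∑ k ∈ Finset.range (n + 1),
            a ((k : ℕ) : ℤ) * b (((n - k : ℕ) : ℤ)) := by
      rw [Finset.range_add, Finset.sum_union (by
        rw [Finset.disjoint_left]
        intro x hx hx2
        rw [Finset.mem_range] at hx
        rw [Finset.mem_map] at hx2
        obtain ⟨y, _, hy⟩ := hx2
        simp only [addLeftEmbedding_apply] at hy
        omega)]
      rw [Finset.sum_eq_zero (fun t ht => by
        rw [Finset.mem_range] at ht
        rw [ha _ (by push_cast; omega), zero_mul]), zero_add]
      rw [Finset.sum_map]
      apply Finset.sum_congr rfl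
      intro k hk
      rw [Finset.mem_range] at hk
      simp only [addLeftEmbedding_apply]
      congr 1
      · congr 1
        push_cast
        ring
      · congr 1
        push_cast [Nat.cast_sub (by omega : k ≤ n)]
        omega
    rw [step1, ← step2, step3]
    rcases Nat.eq_zero_or_pos n with h0 | h1
    · have hpq : p = q := Fin.ext (by omega)
      subst hpq
      rw [Matrix.one_apply_eq, h0]
      simp [ha0, hb0]
    · have hpq : p ≠ q := by
        intro h
        rw [h] at hqn
        omega
      rw [Matrix.one_apply_ne hpq]
      rw [← Finset.Nat.sum_antidiagonal_eq_sum_range_succ_mk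
        (fun ij : ℕ × ℕ => a ((ij.1 : ℕ) : ℤ) * b ((ij.2 : ℕ) : ℤ)) n]
      exact hab n h1

end Stmt10Aux

/-- Duality for minors of mutually inverse power series: for a partition `λ` in the
`d × ℓ` box with transpose `λᵗ` (`λᵗ_i = #{j : λ_j ≥ i}`),
`det(a(λ_i + j - i))_{d×d} = (-1)^{|λ|} · det(b(λᵗ_i + j - i))_{ℓ×ℓ}`. -/
theorem stmt_10 {R : Type*} [CommRing R] (a b : ℤ → R)
    (ha : ∀ n : ℤ, n < 0 → a n = 0) (hb : ∀ n : ℤ, n < 0 → b n = 0)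
    (ha0 : a 0 = 1) (hb0 : b 0 = 1)
    (hab : ∀ n : ℕ, 1 ≤ n →
      (∑ p ∈ Finset.HasAntidiagonal.antidiagonal n, a (p.1 : ℤ) * b (p.2 : ℤ)) = 0)
    (d ℓ : ℕ) (lam : Fin d → ℕ) (hlam : Antitone lam) (hle : ∀ i, lam i ≤ ℓ) :
    (Matrix.of fun i j : Fin d =>
        a ((lam i : ℤ) + ((j : ℕ) : ℤ) - ((i : ℕ) : ℤ))).det =
      (-1 : R) ^ (∑ i, lam i) *
        (Matrix.of fun i j : Fin ℓ =>
          b (((Finset.univ.filter fun t : Fin d => (i : ℕ) + 1 ≤ lam t).card : ℤ) +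
            ((j : ℕ) : ℤ) - ((i : ℕ) : ℤ))).det := by
  classical
  open Stmt10Aux in
  set A : Matrix (Fin (d + ℓ)) (Fin (d + ℓ)) R :=
    Matrix.of fun p q => a (((q : ℕ) : ℤ) - ((p : ℕ) : ℤ)) with hA
  set B : Matrix (Fin (d + ℓ)) (Fin (d + ℓ)) R :=
    Matrix.of fun p q => b (((q : ℕ) : ℤ) - ((p : ℕ) : ℤ)) with hB
  have hABone : A * B = 1 := Stmt10Aux.AB_one a b ha hb ha0 hb0 hab (d + ℓ)
  set ρ := Stmt10Aux.rhoE d ℓ lam hlam hle with hρ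
  set σ := Stmt10Aux.sigE d ℓ with hσ
  set A' := A.submatrix ρ σ with hA'
  set B' := B.submatrix σ ρ with hB'
  have h1 : A' * B' = 1 := by
    rw [hA', hB', Matrix.submatrix_mul_equiv, hABone, Matrix.submatrix_one_equiv]
  -- block equations
  have hblocks := h1
  rw [← Matrix.fromBlocks_toBlocks A', ← Matrix.fromBlocks_toBlocks B',
    Matrix.fromBlocks_multiply, ← Matrix.fromBlocks_one] at hblocks
  have e12 : A'.toBlocks₁₁ * B'.toBlocks₁₂ + A'.toBlocks₁₂ * B'.toBlocks₂₂ = 0 := by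
    have h := congrArg Matrix.toBlocks₁₂ hblocks
    simp only [Matrix.toBlocks_fromBlocks₁₂] at h
    exact h
  have e22 : A'.toBlocks₂₁ * B'.toBlocks₁₂ + A'.toBlocks₂₂ * B'.toBlocks₂₂ = 1 := by
    have h := congrArg Matrix.toBlocks₂₂ hblocks
    simp only [Matrix.toBlocks_fromBlocks₂₂] at h
    exact h
  have key : A' * Matrix.fromBlocks 1 B'.toBlocks₁₂ 0 B'.toBlocks₂₂
      = Matrix.fromBlocks A'.toBlocks₁₁ 0 A'.toBlocks₂₁ 1 := by
    conv_lhs => rw [← Matrix.fromBlocks_toBlocks A']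
    rw [Matrix.fromBlocks_multiply]
    simp only [Matrix.mul_one, Matrix.mul_zero, add_zero]
    rw [e12, e22]
  have hdet := congrArg Matrix.det key
  rw [Matrix.det_mul, Matrix.det_fromBlocks_zero₂₁, Matrix.det_fromBlocks_zero₁₂] at hdet
  simp only [Matrix.det_one, one_mul, mul_one] at hdet
  -- hdet : A'.det * B'.toBlocks₂₂.det = A'.toBlocks₁₁.det
  have hAdet : A.det = 1 := by
    rw [Matrix.det_of_upperTriangular (by
      intro i j hij
      show a (((j : ℕ) : ℤ) - ((i : ℕ) : ℤ)) = 0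
      apply ha
      have : (j : ℕ) < (i : ℕ) := hij
      omega)]
    apply Finset.prod_eq_one
    intro i _
    show a (((i : ℕ) : ℤ) - ((i : ℕ) : ℤ)) = 1
    rw [sub_self, ha0]
  have hA'det : A'.det
      = ((Equiv.Perm.sign (σ.trans ρ.symm) : ℤ) : R) := by
    have hAsub : A' = (A.submatrix ρ ρ).submatrix id (σ.trans ρ.symm) := by
      rw [hA']
      ext x y
      simp only [Matrix.submatrix_apply, id_eq, Equiv.trans_apply,
        Equiv.apply_symm_apply]
    rw [hAsub, Matrix.det_permute', Matrix.det_submatrix_equiv_self, hAdet, mul_one]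
  have hsign := Stmt10Aux.sign_tau d ℓ (∑ i, lam i) lam hlam hle rfl
  rw [← hρ, ← hσ] at hsign
  have ha11 : A'.toBlocks₁₁
      = Matrix.of (fun i j : Fin d =>
          a ((lam i : ℤ) + ((j : ℕ) : ℤ) - ((i : ℕ) : ℤ))) := by
    ext i j
    show A (ρ (Sum.inl i)) (σ (Sum.inl j)) = _
    simp only [Matrix.of_apply, hA]
    congr 1
    have h1 : ((ρ (Sum.inl i) : Fin (d + ℓ)) : ℕ) = ℓ - lam i + (i : ℕ) := rfl
    have h2 : ((σ (Sum.inl j) : Fin (d + ℓ)) : ℕ) = ℓ + (j : ℕ) := rfl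
    rw [h1, h2]
    have := hle i
    omega
  have hb22 : B'.toBlocks₂₂
      = (Matrix.of (fun i j : Fin ℓ =>
          b (((Finset.univ.filter fun t : Fin d => (i : ℕ) + 1 ≤ lam t).card : ℤ) +
            ((j : ℕ) : ℤ) - ((i : ℕ) : ℤ)))).transpose := by
    ext i j
    show B (σ (Sum.inr i)) (ρ (Sum.inr j)) = _
    simp only [Matrix.transpose_apply, Matrix.of_apply, hB]
    congr 1
    have h1 : ((σ (Sum.inr i) : Fin (d + ℓ)) : ℕ) = ℓ - 1 - (i : ℕ) := rfl
    have h2 : ((ρ (Sum.inr j) : Fin (d + ℓ)) : ℕ)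
        = (ℓ - 1 - (j : ℕ)) + Stmt10Aux.Tt d lam (j : ℕ) := rfl
    rw [h1, h2,
      show (Finset.univ.filter fun t : Fin d => (j : ℕ) + 1 ≤ lam t).card
        = Stmt10Aux.Tt d lam (j : ℕ) from rfl]
    have hi := i.isLt
    have hj := j.isLt
    have hT := Stmt10Aux.Tt_le d lam (j : ℕ)
    omega
  rw [hb22, Matrix.det_transpose] at hdet
  rw [← ha11, ← hdet, hA'det, hsign]
  push_cast
  ring
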